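/- Let K > 1 be an integer and for k ∈ {1,...,K} define β_k(x) := ∑_{ℓ=k}^{K} C(ℓ−1, k−1)·(1−x)^{ℓ−k}, where C denotes the binomial coefficient. Then for every k with 1 ≤ k < K and every x ∈ (0,1), β_k(x) > x·β_{k+1}(x). -/

import Mathlib

lemma beta_key (m : ℕ) : ∀ K, m + 1 < K → ∀ y : ℝ,
    ∑ ℓ ∈ Finset.Icc (m+1) K, ((ℓ - 1).choose m : ℝ) * y ^ (ℓ - (m+1))
      = (1 - y) * ∑ ℓ ∈ Finset.Icc (m+2) K, ((ℓ - 1).choose (m+1) : ℝ) * y ^ (ℓ - (m+2))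
        + (K.choose (m+1) : ℝ) * y ^ (K - (m+1)) := by
  intro K hK
  induction K, hK using Nat.le_induction with
  | base =>
      intro y
      rw [Finset.sum_Icc_succ_top (by omega), Finset.Icc_self, Finset.sum_singleton,
        Finset.Icc_self, Finset.sum_singleton]
      have h1 : m + 1 - 1 = m := by omega
      have h2 : m + 2 - 1 = m + 1 := by omega
      rw [h1, h2]
      simp only [Nat.sub_self, Nat.choose_self, Nat.choose_succ_self_right, pow_zero]
      have h3 : m + 2 - (m + 1) = 1 := by omega
      rw [h3]
      push_cast
      ring
  | succ K hK ih =>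
      intro y
      rw [Finset.sum_Icc_succ_top (by omega), Finset.sum_Icc_succ_top (by omega), ih y]
      have h1 : K + 1 - 1 = K := by omega
      have h2 : K + 1 - (m + 1) = (K - (m+1)) + 1 := by omega
      have h3 : K + 1 - (m + 2) = K - (m + 1) := by omega
      rw [h1, h2, h3]
      have hp : (K+1).choose (m+1) = K.choose m + K.choose (m+1) := Nat.choose_succ_succ K m
      rw [hp]
      push_cast
      ring

/-- For `K > 1` and `β_k(x) = ∑_{ℓ=k}^K C(ℓ-1,k-1) (1-x)^(ℓ-k)`,
we have `β_k(x) > x * β_(k+1)(x)` for every `1 ≤ k < K` and `x ∈ (0,1)`. -/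
theorem beta_gt_x_mul_beta_succ
    (K : ℕ) (hK : 1 < K) (β : ℕ → ℝ → ℝ)
    (hβ : ∀ k ∈ Finset.Icc 1 K, ∀ x : ℝ,
      β k x = ∑ ℓ ∈ Finset.Icc k K, ((ℓ - 1).choose (k - 1) : ℝ) * (1 - x) ^ (ℓ - k)) :
    ∀ k : ℕ, 1 ≤ k → k < K → ∀ x ∈ Set.Ioo (0 : ℝ) 1,
      x * β (k + 1) x < β k x := by
  intro k hk1 hkK x hx
  obtain ⟨hx0, hx1⟩ := hx
  obtain ⟨m, rfl⟩ : ∃ m, k = m + 1 := ⟨k - 1, by omega⟩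
  have hβk := hβ (m+1) (Finset.mem_Icc.mpr ⟨by omega, by omega⟩) x
  have hβk1 := hβ (m+2) (Finset.mem_Icc.mpr ⟨by omega, by omega⟩) x
  have hk1' : m + 1 - 1 = m := by omega
  have hk2' : m + 2 - 1 = m + 1 := by omega
  rw [hk1'] at hβk
  rw [hk2'] at hβk1
  have key := beta_key m K (by omega) (1 - x)
  have hpos : (0:ℝ) < (K.choose (m+1) : ℝ) * (1 - x) ^ (K - (m+1)) := by
    apply mul_pos
    · exact_mod_cast Nat.choose_pos (by omega : m + 1 ≤ K)
    · exact pow_pos (by linarith) _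
  rw [hβk, hβk1, key]
  have : (1 : ℝ) - (1 - x) = x := by ring
  rw [this]
  linarith
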